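/- Let P be a finite set of points in general position in ℝ². Let a, b, p, q, r be points of P such that p, q, a, b, r are the vertices of a convex pentagon (in that cyclic order) and the triangle with vertices p, a, b contains no point of P other than its vertices. Then there exist points q′ ∈ P lying in the triangle paq (possibly q′ = q) and r′ ∈ P lying in the triangle pbr (possibly r′ = r) such that p, q′, a, b, r′ are the vertices of a 5-hole of P: a convex pentagon with no point of P in its interior. -/

import Mathlib

open scoped Classical

noncomputable section

abbrev Pt : Type := EuclideanSpace ℝ (Fin 2)

/-- No three distinct points of `P` are collinear. -/
def GenPos (P : Set Pt) : Prop :=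
  ∀ a ∈ P, ∀ b ∈ P, ∀ c ∈ P, a ≠ b → a ≠ c → b ≠ c → ¬ Collinear ℝ ({a, b, c} : Set Pt)

/-- A set of points is in convex position if every point is an extreme point:
no point lies in the convex hull of the others. -/
def ConvexPos (S : Set Pt) : Prop := ∀ p ∈ S, p ∉ convexHull ℝ (S \ {p})

/-- The 5-holes of `P`: 5-element subsets of `P` in convex position whose
convex hull has no point of `P` in its interior. -/
def Holes5 (P : Set Pt) : Set (Finset Pt) :=
  {H | H.card = 5 ∧ ↑H ⊆ P ∧ ConvexPos ↑H ∧
    ∀ x ∈ P, x ∉ interior (convexHull ℝ (H : Set Pt))}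

/-- Orientation determinant of the triple `(o, a, b)`. -/
def det2 (o a b : Pt) : ℝ :=
  (a 0 - o 0) * (b 1 - o 1) - (a 1 - o 1) * (b 0 - o 0)

/-- `v` lists the vertices of a strictly convex polygon in cyclic order:
for every edge `v i v (i+1)`, all other vertices lie strictly on the same side. -/
def ConvexCyclicOrder {n : ℕ} [NeZero n] (v : Fin n → Pt) : Prop :=
  ∃ σ : ℝ, (σ = 1 ∨ σ = -1) ∧
    ∀ i j : Fin n, j ≠ i → j ≠ i + 1 → 0 < σ * det2 (v i) (v (i + 1)) (v j)

/-- `x` lies in the closed angular region at `p` spanned by the rays from `p`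
through `a` and through `c` (the convex cone generated by the two rays). -/
def InAngle (a p c x : Pt) : Prop :=
  ∃ s t : ℝ, 0 ≤ s ∧ 0 ≤ t ∧ x = p + s • (a - p) + t • (c - p)

/-- The extreme points (convex-hull vertices) of a planar point set. -/
def extremePts (P : Set Pt) : Set Pt := {p ∈ P | p ∉ convexHull ℝ (P \ {p})}

/-- What remains of `P` after peeling off the first `n` convex layers. -/
def layerRest (P : Set Pt) : ℕ → Set Pt
  | 0 => P
  | n + 1 => layerRest P n \ extremePts (layerRest P n)

/-- The `i`-th convex layer of `P` (0-indexed). -/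
def layer (P : Set Pt) (i : ℕ) : Set Pt := extremePts (layerRest P i)

/-- The number of convex layers of `P`. -/
def numLayers (P : Set Pt) : ℕ := {i | (layer P i).Nonempty}.ncard

/-! ### Auxiliary lemmas -/

lemma det2_cyc (u v w : Pt) : det2 u v w = det2 v w u := by simp [det2]; ring

lemma det2_self13 (u v : Pt) : det2 u v u = 0 := by simp [det2]

lemma det2_self23 (u v : Pt) : det2 u v v = 0 := by simp [det2]; ring

lemma det2_swap12 (u v w : Pt) : det2 u v w = -det2 v u w := by simp [det2]; ring

lemma det2_aff2 (o a x y : Pt) (s t : ℝ) (h : s + t = 1) :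
    det2 o a (s • x + t • y) = s * det2 o a x + t * det2 o a y := by
  simp only [det2, PiLp.add_apply, PiLp.smul_apply, smul_eq_mul]
  linear_combination ((a 0 - o 0) * o 1 - (a 1 - o 1) * o 0) * h

lemma det2_aff3 (o a x y z : Pt) (s t u : ℝ) (h : s + t + u = 1) :
    det2 o a (s • x + t • y + u • z) = s * det2 o a x + t * det2 o a y + u * det2 o a z := by
  simp only [det2, PiLp.add_apply, PiLp.smul_apply, smul_eq_mul]
  linear_combination ((a 0 - o 0) * o 1 - (a 1 - o 1) * o 0) * h

lemma det2_sum (u v w x : Pt) :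
    det2 v w x + det2 w u x + det2 u v x = det2 u v w := by simp [det2]; ring

lemma det2_cramer (u v w x : Pt) :
    det2 u v w • x = det2 v w x • u + det2 w u x • v + det2 u v x • w := by
  ext i
  fin_cases i <;>
    simp only [Fin.mk_zero, Fin.mk_one, PiLp.add_apply, PiLp.smul_apply, smul_eq_mul, det2] <;>
    ring

lemma mem_tri {u v w x : Pt} :
    x ∈ convexHull ℝ ({u, v, w} : Set Pt) ↔
      ∃ α β γ : ℝ, 0 ≤ α ∧ 0 ≤ β ∧ 0 ≤ γ ∧ α + β + γ = 1 ∧ x = α • u + β • v + γ • w := by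
  constructor
  · intro hx
    rw [show ({u, v, w} : Set Pt) = insert u {v, w} from rfl,
      convexHull_insert ⟨v, by simp⟩, convexHull_pair] at hx
    rw [mem_convexJoin] at hx
    obtain ⟨u', hu', z, hz, hxz⟩ := hx
    rw [Set.mem_singleton_iff] at hu'
    subst hu'
    obtain ⟨b, c, hb, hc, hbc, rfl⟩ := hz
    obtain ⟨s, t, hs, ht, hst, rfl⟩ := hxz
    refine ⟨s, t * b, t * c, hs, by positivity, by positivity, by nlinarith, ?_⟩
    simp only [smul_add, smul_smul]
    abel
  · rintro ⟨α, β, γ, hα, hβ, hγ, hsum, rfl⟩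
    by_cases h : β + γ = 0
    · have hβ0 : β = 0 := by linarith
      have hγ0 : γ = 0 := by linarith
      have hα1 : α = 1 := by linarith
      subst hβ0; subst hγ0; subst hα1
      simp only [one_smul, zero_smul, add_zero]
      exact subset_convexHull ℝ _ (by simp)
    · have hpos : 0 < β + γ := lt_of_le_of_ne (by linarith) (Ne.symm h)
      have hvw : v ∈ convexHull ℝ ({u, v, w} : Set Pt) := subset_convexHull ℝ _ (by simp)
      have hww : w ∈ convexHull ℝ ({u, v, w} : Set Pt) := subset_convexHull ℝ _ (by simp)
      have huu : u ∈ convexHull ℝ ({u, v, w} : Set Pt) := subset_convexHull ℝ _ (by simp)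
      have hz : (β / (β + γ)) • v + (γ / (β + γ)) • w ∈ convexHull ℝ ({u, v, w} : Set Pt) := by
        apply (convex_convexHull ℝ _).segment_subset hvw hww
        exact ⟨β / (β + γ), γ / (β + γ), by positivity, by positivity, by field_simp, rfl⟩
      have := (convex_convexHull ℝ ({u, v, w} : Set Pt)).segment_subset huu hz
        ⟨α, β + γ, hα, le_of_lt hpos, by linarith, rfl⟩
      convert this using 1
      rw [smul_add, smul_smul, smul_smul]
      rw [mul_div_cancel₀ _ h, mul_div_cancel₀ _ h, add_assoc]

lemma mem_tri_of_det (u v w x : Pt) (c : ℝ) (hbase : 0 < c * det2 u v w)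
    (h1 : 0 ≤ c * det2 v w x) (h2 : 0 ≤ c * det2 w u x) (h3 : 0 ≤ c * det2 u v x) :
    x ∈ convexHull ℝ ({u, v, w} : Set Pt) := by
  set D := c * det2 u v w with hD
  have hDne : D ≠ 0 := hbase.ne'
  refine mem_tri.mpr ⟨c * det2 v w x / D, c * det2 w u x / D, c * det2 u v x / D,
    div_nonneg h1 hbase.le, div_nonneg h2 hbase.le, div_nonneg h3 hbase.le, ?_, ?_⟩
  · rw [← add_div, ← add_div, div_eq_one_iff_eq hDne]
    have hsum := det2_sum u v w x
    rw [hD]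
    linear_combination c * hsum
  · have hcr := det2_cramer u v w x
    have h2' : D • x = (c * det2 v w x) • u + (c * det2 w u x) • v + (c * det2 u v x) • w := by
      have := congrArg (fun y : Pt => c • y) hcr
      simpa [smul_smul, smul_add] using this
    have hx : x = D⁻¹ • (D • x) := by rw [smul_smul, inv_mul_cancel₀ hDne, one_smul]
    rw [div_eq_inv_mul, div_eq_inv_mul, div_eq_inv_mul]
    conv_lhs => rw [hx, h2']
    rw [smul_add, smul_add, smul_smul, smul_smul, smul_smul]

lemma convex_halfplane (u v : Pt) (c : ℝ) : Convex ℝ {x : Pt | 0 ≤ c * det2 u v x} := by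
  intro x hx y hy s t hs ht hst
  simp only [Set.mem_setOf_eq] at *
  rw [det2_aff2 u v x y s t hst]
  nlinarith

lemma not_mem_interior (u v y : Pt) (c : ℝ) (S : Set Pt)
    (hS : S ⊆ {x : Pt | 0 ≤ c * det2 u v x}) (hy : 0 < c * det2 u v y) :
    u ∉ interior S := by
  intro h
  rw [mem_interior_iff_mem_nhds, Metric.mem_nhds_iff] at h
  obtain ⟨ε, hε, hball⟩ := h
  have huy : u ≠ y := by
    rintro rfl
    simp [det2] at hy
  have hnorm : 0 < ‖u - y‖ := by
    rw [norm_pos_iff, sub_ne_zero]; exact huy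
  set t : ℝ := ε / (2 * ‖u - y‖) with ht
  have htpos : 0 < t := by positivity
  have hzmem : u + t • (u - y) ∈ Metric.ball u ε := by
    rw [Metric.mem_ball, dist_eq_norm]
    have h0 : u + t • (u - y) - u = t • (u - y) := by abel
    rw [h0, norm_smul]
    simp only [Real.norm_eq_abs, abs_of_pos htpos]
    rw [ht, div_mul_eq_mul_div, mul_comm, div_lt_iff₀ (by positivity)]
    nlinarith
  have hmem := hS (hball hzmem)
  simp only [Set.mem_setOf_eq] at hmem
  have heq : u + t • (u - y) = (1 + t) • u + (-t) • y := by
    rw [smul_sub, add_smul, one_smul, neg_smul]; abel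
  rw [heq, det2_aff2 u v u y (1 + t) (-t) (by ring)] at hmem
  rw [det2_self13] at hmem
  nlinarith

lemma exists_max_on {S : Set Pt} (f : Pt → ℝ) (hS : S.Finite) (hne : S.Nonempty) :
    ∃ m ∈ S, ∀ x ∈ S, f x ≤ f m := by
  exact Set.exists_max_image S f hS hne

lemma pos_aux1 {s t g : ℝ} (h : s = g * t) (hs : s < 0) (ht : t < 0) (hg : 0 ≤ g) : 0 < g := by
  rcases hg.lt_or_eq with hlt | heq
  · exact hlt
  · rw [← heq, zero_mul] at h; linarith

lemma pos_aux1' {s t g : ℝ} (h : s = g * t) (hs : 0 < s) (ht : 0 < t) (hg : 0 ≤ g) : 0 < g := by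
  rcases hg.lt_or_eq with hlt | heq
  · exact hlt
  · rw [← heq, zero_mul] at h; linarith

lemma sig_pos1 {s e c : ℝ} (hc : 0 < c) (h : 0 < s * e) : 0 < s * (c * e) := by nlinarith

lemma sig_pos2 {s e1 e2 b c : ℝ} (hb : 0 ≤ b) (h1 : 0 ≤ s * e1) (hc : 0 < c) (h2 : 0 < s * e2) :
    0 < s * (b * e1 + c * e2) := by nlinarith

lemma sig_pos3 {s e1 e2 e3 a b c : ℝ} (ha : 0 ≤ a) (h1 : 0 ≤ s * e1) (hb : 0 ≤ b)
    (h2 : 0 ≤ s * e2) (hc : 0 < c) (h3 : 0 < s * e3) :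
    0 < s * (a * e1 + b * e2 + c * e3) := by nlinarith

lemma eq_one_aux {s t g : ℝ} (h : s = g * t) (hst : s ≤ t) (ht : t < 0) (hg1 : g ≤ 1) :
    g = 1 := by
  have h1 : (1 - g) * t ≤ 0 := mul_nonpos_of_nonneg_of_nonpos (by linarith) ht.le
  nlinarith

lemma eq_one_aux' {s t g : ℝ} (h : s = g * t) (hst : t ≤ s) (ht : 0 < t) (hg1 : g ≤ 1) :
    g = 1 := by
  have h1 : 0 ≤ (1 - g) * t := mul_nonneg (by linarith) ht.le
  nlinarith

set_option maxHeartbeats 3000000 in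
theorem stmt7 (P : Set Pt) (hPfin : P.Finite) (hgp : GenPos P)
    (p q a b r : Pt) (hp : p ∈ P) (hq : q ∈ P) (ha : a ∈ P) (hb : b ∈ P) (hr : r ∈ P)
    (hpent : ConvexCyclicOrder ![p, q, a, b, r])
    (htri : ∀ x ∈ P, x ∈ convexHull ℝ ({p, a, b} : Set Pt) → x ∈ ({p, a, b} : Set Pt)) :
    ∃ q' ∈ P, ∃ r' ∈ P,
      q' ∈ convexHull ℝ ({p, a, q} : Set Pt) ∧
      r' ∈ convexHull ℝ ({p, b, r} : Set Pt) ∧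
      ConvexCyclicOrder ![p, q', a, b, r'] ∧
      ∀ x ∈ P, x ∉ interior (convexHull ℝ ({p, q', a, b, r'} : Set Pt)) := by
  obtain ⟨σ, hσ1, hσ⟩ := hpent
  have B1 : 0 < σ * det2 p q a := by simpa using hσ 0 2 (by decide) (by decide)
  have B2 : 0 < σ * det2 p q b := by simpa using hσ 0 3 (by decide) (by decide)
  have B3 : 0 < σ * det2 p q r := by simpa using hσ 0 4 (by decide) (by decide)
  have B4 : 0 < σ * det2 q a b := by simpa using hσ 1 3 (by decide) (by decide)
  have B5 : 0 < σ * det2 q a r := by simpa using hσ 1 4 (by decide) (by decide)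
  have B6 : 0 < σ * det2 q a p := by simpa using hσ 1 0 (by decide) (by decide)
  have B7 : 0 < σ * det2 a b r := by simpa using hσ 2 4 (by decide) (by decide)
  have B8 : 0 < σ * det2 a b p := by simpa using hσ 2 0 (by decide) (by decide)
  have B9 : 0 < σ * det2 a b q := by simpa using hσ 2 1 (by decide) (by decide)
  have B10 : 0 < σ * det2 b r p := by simpa using hσ 3 0 (by decide) (by decide)
  have B11 : 0 < σ * det2 b r q := by simpa using hσ 3 1 (by decide) (by decide)
  have B12 : 0 < σ * det2 b r a := by simpa using hσ 3 2 (by decide) (by decide)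
  have B13 : 0 < σ * det2 r p q := by simpa using hσ 4 1 (by decide) (by decide)
  have B14 : 0 < σ * det2 r p a := by simpa using hσ 4 2 (by decide) (by decide)
  have B15 : 0 < σ * det2 r p b := by simpa using hσ 4 3 (by decide) (by decide)
  -- the candidate set for q'
  set S : Set Pt :=
    {x | x ∈ P ∧ x ∈ convexHull ℝ ({p, a, q} : Set Pt) ∧ σ * det2 p a x < 0} with hSdef
  have hSfin : S.Finite := hPfin.subset fun x hx => hx.1
  have hqneg : σ * det2 p a q < 0 := by
    have h : σ * det2 p a q = -(σ * det2 p q a) := by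
      rw [det2_cyc p a q, det2_cyc a q p, det2_swap12 q p a]; ring
    rw [h]; linarith
  have hqS : q ∈ S := ⟨hq, subset_convexHull ℝ _ (by simp), hqneg⟩
  obtain ⟨q', hq'S, hq'max⟩ :=
    exists_max_on (fun x => σ * det2 p a x) hSfin ⟨q, hqS⟩
  obtain ⟨hq'P, hq'conv, hq'neg⟩ := hq'S
  obtain ⟨α, β, γ, hα, hβ, hγ, hsum, hq'eq⟩ := mem_tri.mp hq'conv
  have keyQ : ∀ u v : Pt, det2 u v q' = α * det2 u v p + β * det2 u v a + γ * det2 u v q := by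
    intro u v; rw [hq'eq]; exact det2_aff3 u v p a q α β γ hsum
  have hpq'val : σ * det2 p a q' = γ * (σ * det2 p a q) := by
    rw [keyQ p a, det2_self13, det2_self23]; ring
  have hγpos : 0 < γ := pos_aux1 hpq'val hq'neg hqneg hγ
  -- the candidate set for r'
  set S' : Set Pt :=
    {x | x ∈ P ∧ x ∈ convexHull ℝ ({p, b, r} : Set Pt) ∧ 0 < σ * det2 p b x} with hS'def
  have hS'fin : S'.Finite := hPfin.subset fun x hx => hx.1
  have hrpos : 0 < σ * det2 p b r := by rw [det2_cyc p b r]; exact B10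
  have hrS' : r ∈ S' := ⟨hr, subset_convexHull ℝ _ (by simp), hrpos⟩
  obtain ⟨r', hr'S, hr'max⟩ :=
    exists_max_on (fun x => -(σ * det2 p b x)) hS'fin ⟨r, hrS'⟩
  obtain ⟨hr'P, hr'conv, hr'pos⟩ := hr'S
  obtain ⟨α', β', γ', hα', hβ', hγ', hsum', hr'eq⟩ := mem_tri.mp hr'conv
  have keyR : ∀ u v : Pt, det2 u v r' = α' * det2 u v p + β' * det2 u v b + γ' * det2 u v r := by
    intro u v; rw [hr'eq]; exact det2_aff3 u v p b r α' β' γ' hsum'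
  have hpbr'val : σ * det2 p b r' = γ' * (σ * det2 p b r) := by
    rw [keyR p b, det2_self13, det2_self23]; ring
  have hγ'pos : 0 < γ' := pos_aux1' hpbr'val hr'pos hrpos hγ'
  -- intermediate determinant computations
  have hQ_apq' : det2 a p q' = γ * det2 p q a := by
    rw [keyQ a p, det2_self23, det2_self13, det2_cyc a p q]; ring
  have hQ_pq'b : det2 p q' b = β * det2 a b p + γ * det2 p q b := by
    rw [det2_cyc p q' b, det2_cyc q' b p, keyQ b p, det2_self23,
      det2_cyc b p a, det2_cyc p a b, det2_cyc b p q]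
    ring
  have hQ_abq' : det2 a b q' = α * det2 a b p + γ * det2 a b q := by
    rw [keyQ a b, det2_self13]; ring
  have hQ_rpq' : det2 r p q' = β * det2 r p a + γ * det2 r p q := by
    rw [keyQ r p, det2_self23]; ring
  have hR_par' : det2 p a r' = β' * det2 a b p + γ' * det2 r p a := by
    rw [keyR p a, det2_self13, det2_cyc p a b, det2_cyc p a r, det2_cyc a r p]; ring
  have hR_pqr' : det2 p q r' = β' * det2 p q b + γ' * det2 p q r := by
    rw [keyR p q, det2_self13]; ring
  have hR_abr' : det2 a b r' = α' * det2 a b p + γ' * det2 a b r := by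
    rw [keyR a b, det2_self23]; ring
  have hR_pbr' : det2 p b r' = γ' * det2 b r p := by
    rw [keyR p b, det2_self13, det2_self23, det2_cyc p b r]; ring
  have hR_qbr' : det2 q b r' = α' * det2 p q b + γ' * det2 b r q := by
    rw [keyR q b, det2_self23, det2_cyc q b p, det2_cyc b p q, det2_cyc q b r]; ring
  -- the strict positivity facts for the new pentagon
  have G1' : 0 < σ * det2 p q' a := by
    rw [det2_cyc p q' a, det2_cyc q' a p, hQ_apq']
    exact sig_pos1 hγpos B1
  have G2' : 0 < σ * det2 p q' b := by
    rw [hQ_pq'b]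
    exact sig_pos2 hβ B8.le hγpos B2
  have hpq'r : 0 < σ * det2 p q' r := by
    rw [det2_cyc p q' r, det2_cyc q' r p, hQ_rpq']
    exact sig_pos2 hβ B14.le hγpos B13
  have G3' : 0 < σ * det2 p q' r' := by
    have h3eq : det2 p q' r' = β' * det2 p q' b + γ' * det2 p q' r := by
      rw [keyR p q', det2_self13]; ring
    rw [h3eq]
    exact sig_pos2 hβ' G2'.le hγ'pos hpq'r
  have G4' : 0 < σ * det2 q' a b := by
    rw [det2_cyc q' a b, hQ_abq']
    exact sig_pos2 hα B8.le hγpos B9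
  have hq'ar : 0 < σ * det2 q' a r := by
    have heq : det2 q' a r = α * det2 r p a + γ * det2 q a r := by
      rw [det2_cyc q' a r, keyQ a r, det2_self13, det2_cyc a r p, det2_cyc a r q,
        det2_cyc r q a]
      ring
    rw [heq]
    exact sig_pos2 hα B14.le hγpos B5
  have G6' : 0 < σ * det2 q' a p := by
    rw [det2_cyc q' a p, hQ_apq']
    exact sig_pos1 hγpos B1
  have G5' : 0 < σ * det2 q' a r' := by
    rw [keyR q' a]
    exact sig_pos3 hα' G6'.le hβ' G4'.le hγ'pos hq'ar
  have G7' : 0 < σ * det2 a b r' := by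
    rw [hR_abr']
    exact sig_pos2 hα' B8.le hγ'pos B7
  have G9' : 0 < σ * det2 a b q' := by
    rw [hQ_abq']
    exact sig_pos2 hα B8.le hγpos B9
  have G10' : 0 < σ * det2 b r' p := by
    rw [det2_cyc b r' p, det2_cyc r' p b, hR_pbr']
    exact sig_pos1 hγ'pos B10
  have hbr'q : 0 < σ * det2 b r' q := by
    rw [det2_cyc b r' q, det2_cyc r' q b, hR_qbr']
    exact sig_pos2 hα' B2.le hγ'pos B11
  have G12' : 0 < σ * det2 b r' a := by
    rw [det2_cyc b r' a, det2_cyc r' a b, hR_abr']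
    exact sig_pos2 hα' B8.le hγ'pos B7
  have G11' : 0 < σ * det2 b r' q' := by
    rw [keyQ b r']
    exact sig_pos3 hα G10'.le hβ G12'.le hγpos hbr'q
  have G14' : 0 < σ * det2 r' p a := by
    rw [det2_cyc r' p a, hR_par']
    exact sig_pos2 hβ' B8.le hγ'pos B14
  have hr'pq : 0 < σ * det2 r' p q := by
    rw [det2_cyc r' p q, hR_pqr']
    exact sig_pos2 hβ' B2.le hγ'pos B3
  have G13' : 0 < σ * det2 r' p q' := by
    have heq : det2 r' p q' = β * det2 r' p a + γ * det2 r' p q := by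
      rw [keyQ r' p, det2_self23]; ring
    rw [heq]
    exact sig_pos2 hβ G14'.le hγpos hr'pq
  have G15' : 0 < σ * det2 r' p b := by
    rw [det2_cyc r' p b, hR_pbr']
    exact sig_pos1 hγ'pos B10
  have G8' : 0 < σ * det2 a b p := B8
  -- the edge halfplane containments
  set V' : Set Pt := ({p, q', a, b, r'} : Set Pt) with hV'def
  have hV'gen : ∀ y ∈ V', y = p ∨ y = q' ∨ y = a ∨ y = b ∨ y = r' := by
    intro y hy
    simpa [hV'def, Set.mem_insert_iff, Set.mem_singleton_iff] using hy
  have hedge1 : convexHull ℝ V' ⊆ {x : Pt | 0 ≤ σ * det2 p q' x} := by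
    apply convexHull_min ?_ (convex_halfplane p q' σ)
    intro y hy
    rcases hV'gen y hy with rfl | rfl | rfl | rfl | rfl
    · simp [Set.mem_setOf_eq, det2_self13]
    · simp [Set.mem_setOf_eq, det2_self23]
    · exact G1'.le
    · exact G2'.le
    · exact G3'.le
  have hedge2 : convexHull ℝ V' ⊆ {x : Pt | 0 ≤ σ * det2 q' a x} := by
    apply convexHull_min ?_ (convex_halfplane q' a σ)
    intro y hy
    rcases hV'gen y hy with rfl | rfl | rfl | rfl | rfl
    · exact G6'.le
    · simp [Set.mem_setOf_eq, det2_self13]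
    · simp [Set.mem_setOf_eq, det2_self23]
    · exact G4'.le
    · exact G5'.le
  have hedge3 : convexHull ℝ V' ⊆ {x : Pt | 0 ≤ σ * det2 a b x} := by
    apply convexHull_min ?_ (convex_halfplane a b σ)
    intro y hy
    rcases hV'gen y hy with rfl | rfl | rfl | rfl | rfl
    · exact B8.le
    · exact G9'.le
    · simp [Set.mem_setOf_eq, det2_self13]
    · simp [Set.mem_setOf_eq, det2_self23]
    · exact G7'.le
  have hedge4 : convexHull ℝ V' ⊆ {x : Pt | 0 ≤ σ * det2 b r' x} := by
    apply convexHull_min ?_ (convex_halfplane b r' σ)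
    intro y hy
    rcases hV'gen y hy with rfl | rfl | rfl | rfl | rfl
    · exact G10'.le
    · exact G11'.le
    · exact G12'.le
    · simp [Set.mem_setOf_eq, det2_self13]
    · simp [Set.mem_setOf_eq, det2_self23]
  have hedge5 : convexHull ℝ V' ⊆ {x : Pt | 0 ≤ σ * det2 r' p x} := by
    apply convexHull_min ?_ (convex_halfplane r' p σ)
    intro y hy
    rcases hV'gen y hy with rfl | rfl | rfl | rfl | rfl
    · simp [Set.mem_setOf_eq, det2_self23]
    · exact G13'.le
    · exact G14'.le
    · exact G15'.le
    · simp [Set.mem_setOf_eq, det2_self13]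
  -- vertices are not interior
  have hpNI : p ∉ interior (convexHull ℝ V') := not_mem_interior p q' a σ _ hedge1 G1'
  have hq'NI : q' ∉ interior (convexHull ℝ V') := not_mem_interior q' a p σ _ hedge2 G6'
  have haNI : a ∉ interior (convexHull ℝ V') := not_mem_interior a b p σ _ hedge3 B8
  have hbNI : b ∉ interior (convexHull ℝ V') := not_mem_interior b r' p σ _ hedge4 G10'
  have hr'NI : r' ∉ interior (convexHull ℝ V') := not_mem_interior r' p a σ _ hedge5 G14'
  refine ⟨q', hq'P, r', hr'P, hq'conv, hr'conv, ?_, ?_⟩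
  · refine ⟨σ, hσ1, ?_⟩
    intro i j hji hji1
    fin_cases i <;> fin_cases j <;>
      first
        | exact absurd rfl hji
        | exact absurd rfl hji1
        | (norm_num; assumption)
  · intro x hx hint
    have hxhull : x ∈ convexHull ℝ V' := interior_subset hint
    by_cases hc1 : σ * det2 p a x ≤ 0
    · -- x is in triangle p q' a
      have hapx : 0 ≤ σ * det2 a p x := by
        have e : σ * det2 a p x = -(σ * det2 p a x) := by rw [det2_swap12 a p x]; ring
        linarith
      have hmem : x ∈ convexHull ℝ ({p, q', a} : Set Pt) :=
        mem_tri_of_det p q' a x σ G1' (hedge2 hxhull) hapx (hedge1 hxhull)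
      obtain ⟨l1, l2, l3, hl1, hl2, hl3, hlsum, hxeq⟩ := mem_tri.mp hmem
      have hdx : σ * det2 p a x = l2 * (σ * det2 p a q') := by
        rw [hxeq, det2_aff3 p a p q' a l1 l2 l3 hlsum, det2_self13, det2_self23]; ring
      by_cases hl2z : l2 = 0
      · have hxab : x ∈ convexHull ℝ ({p, a, b} : Set Pt) := by
          refine mem_tri.mpr ⟨l1, l3, 0, hl1, hl3, le_refl 0, by linarith, ?_⟩
          rw [hxeq, hl2z]; module
        rcases htri x hx hxab with rfl | rfl | rfl
        · exact hpNI hint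
        · exact haNI hint
        · exact hbNI hint
      · have hl2pos : 0 < l2 := lt_of_le_of_ne hl2 (Ne.symm hl2z)
        have hxpaq : x ∈ convexHull ℝ ({p, a, q} : Set Pt) := by
          refine mem_tri.mpr ⟨l1 + l2 * α, l3 + l2 * β, l2 * γ,
            add_nonneg hl1 (mul_nonneg hl2 hα), add_nonneg hl3 (mul_nonneg hl2 hβ),
            mul_nonneg hl2 hγ, by linear_combination hlsum + l2 * hsum, ?_⟩
          rw [hxeq, hq'eq]; module
        have hxS : x ∈ S := ⟨hx, hxpaq, by
          rw [hdx]; exact mul_neg_of_pos_of_neg hl2pos hq'neg⟩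
        have hle : σ * det2 p a x ≤ σ * det2 p a q' := hq'max x hxS
        have hl2one : l2 = 1 := eq_one_aux hdx hle hq'neg (by linarith)
        have hl1z : l1 = 0 := by linarith
        have hl3z : l3 = 0 := by linarith
        have hxq' : x = q' := by rw [hxeq, hl1z, hl2one, hl3z]; simp
        rw [hxq'] at hint
        exact hq'NI hint
    · push_neg at hc1
      by_cases hc2 : 0 ≤ σ * det2 p b x
      · -- x is in triangle p b r'
        have hPBR' : 0 < σ * det2 p b r' := by
          rw [hR_pbr']; exact sig_pos1 hγ'pos B10
        have hmem : x ∈ convexHull ℝ ({p, b, r'} : Set Pt) :=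
          mem_tri_of_det p b r' x σ hPBR' (hedge4 hxhull) (hedge5 hxhull) hc2
        obtain ⟨l1, l2, l3, hl1, hl2, hl3, hlsum, hxeq⟩ := mem_tri.mp hmem
        have hdx : σ * det2 p b x = l3 * (σ * det2 p b r') := by
          rw [hxeq, det2_aff3 p b p b r' l1 l2 l3 hlsum, det2_self13, det2_self23]; ring
        by_cases hl3z : l3 = 0
        · have hxab : x ∈ convexHull ℝ ({p, a, b} : Set Pt) := by
            refine mem_tri.mpr ⟨l1, 0, l2, hl1, le_refl 0, hl2, by linarith, ?_⟩
            rw [hxeq, hl3z]; module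
          rcases htri x hx hxab with rfl | rfl | rfl
          · exact hpNI hint
          · exact haNI hint
          · exact hbNI hint
        · have hl3pos : 0 < l3 := lt_of_le_of_ne hl3 (Ne.symm hl3z)
          have hxpbr : x ∈ convexHull ℝ ({p, b, r} : Set Pt) := by
            refine mem_tri.mpr ⟨l1 + l3 * α', l2 + l3 * β', l3 * γ',
              add_nonneg hl1 (mul_nonneg hl3 hα'), add_nonneg hl2 (mul_nonneg hl3 hβ'),
              mul_nonneg hl3 hγ', by linear_combination hlsum + l3 * hsum', ?_⟩
            rw [hxeq, hr'eq]; module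
          have hxS' : x ∈ S' := ⟨hx, hxpbr, by
            rw [hdx]; exact mul_pos hl3pos hPBR'⟩
          have hle : -(σ * det2 p b x) ≤ -(σ * det2 p b r') := hr'max x hxS'
          have hle2 : σ * det2 p b r' ≤ σ * det2 p b x := by linarith
          have hl3one : l3 = 1 := eq_one_aux' hdx hle2 hPBR' (by linarith)
          have hl1z : l1 = 0 := by linarith
          have hl2z : l2 = 0 := by linarith
          have hxr' : x = r' := by rw [hxeq, hl1z, hl2z, hl3one]; simp
          rw [hxr'] at hint
          exact hr'NI hint
      · push_neg at hc2
        have hPAB : 0 < σ * det2 p a b := by rw [det2_cyc p a b]; exact B8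
        have hbpx : 0 ≤ σ * det2 b p x := by
          have e : σ * det2 b p x = -(σ * det2 p b x) := by rw [det2_swap12 b p x]; ring
          linarith
        have hxab : x ∈ convexHull ℝ ({p, a, b} : Set Pt) :=
          mem_tri_of_det p a b x σ hPAB (hedge3 hxhull) hbpx hc1.le
        rcases htri x hx hxab with rfl | rfl | rfl
        · exact hpNI hint
        · exact haNI hint
        · exact hbNI hint
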